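/- arXiv:2506.19853 — 4 statements merged into one kernel-verified Lean document; each statement's English description precedes it below -/
import Mathlib

section
/- If 0 < ε ≤ 8n/(2n+1)² and n ≥ 1, then the function g_n(r) = r - ε·r^{2n+1}/(1+r^{2n}) is monotone increasing on (0,∞); consequently, for every I > 0 the equation g_n(r) = I has exactly one positive solution. -/
private lemma gn_hasDerivAt (ε n : ℝ) {r : ℝ} (hr : 0 < r) :
    HasDerivAt (fun r : ℝ => r - ε * r ^ (2 * n + 1) / (1 + r ^ (2 * n)))
      (1 - ε * ((2 * n + 1) * r ^ (2 * n) + (r ^ (2 * n)) ^ 2) / (1 + r ^ (2 * n)) ^ 2) r := by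
  have hD : (0:ℝ) < 1 + r ^ (2 * n) := by positivity
  have h1 : HasDerivAt (fun r : ℝ => r ^ (2 * n + 1)) ((2 * n + 1) * r ^ (2 * n + 1 - 1)) r :=
    Real.hasDerivAt_rpow_const (Or.inl hr.ne')
  have h2 : HasDerivAt (fun r : ℝ => r ^ (2 * n)) ((2 * n) * r ^ (2 * n - 1)) r :=
    Real.hasDerivAt_rpow_const (Or.inl hr.ne')
  have hden : HasDerivAt (fun r : ℝ => 1 + r ^ (2 * n)) ((2 * n) * r ^ (2 * n - 1)) r :=
    h2.const_add 1
  have hnum : HasDerivAt (fun r : ℝ => ε * r ^ (2 * n + 1))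
      (ε * ((2 * n + 1) * r ^ (2 * n + 1 - 1))) r := h1.const_mul ε
  have hdiv := (hasDerivAt_id r).sub (hnum.div hden hD.ne')
  convert hdiv using 1
  · rfl
  · rfl
  · rfl
  have e1 : r ^ (2 * n + 1 - 1) = r ^ (2 * n) := by norm_num
  have e2 : r ^ (2 * n + 1) = r ^ (2 * n) * r := by
    rw [Real.rpow_add hr, Real.rpow_one]
  have e3 : r ^ (2 * n - 1) * r = r ^ (2 * n) := by
    rw [← Real.rpow_add_one hr.ne']
    norm_num
  rw [e1, e2]
  have key : ε * (r ^ (2 * n) * r) * (2 * n * r ^ (2 * n - 1))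
      = ε * r ^ (2 * n) * (2 * n * r ^ (2 * n)) := by rw [← e3]; ring
  rw [key]
  field_simp
  ring

private lemma gn_deriv_pos (ε n s : ℝ) (hn : 1 ≤ n)
    (hε : ε ≤ 8 * n / (2 * n + 1) ^ 2) (hs : 0 < s) (hne : (2 * n - 1) * s ≠ 2 * n + 1) :
    0 < 1 - ε * ((2 * n + 1) * s + s ^ 2) / (1 + s) ^ 2 := by
  have h1 : (0:ℝ) < (1 + s) ^ 2 := by positivity
  rw [sub_pos, div_lt_one h1]
  have h2 : (0:ℝ) < (2 * n + 1) ^ 2 := by positivity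
  have hb : ε * (2 * n + 1) ^ 2 ≤ 8 * n := by
    rw [le_div_iff₀ h2] at hε; linarith
  have hx : (2 * n + 1) - (2 * n - 1) * s ≠ 0 := sub_ne_zero.mpr (Ne.symm hne)
  have hq : 0 < ((2 * n + 1) - (2 * n - 1) * s) ^ 2 :=
    (sq_nonneg _).lt_of_ne (Ne.symm (pow_ne_zero 2 hx))
  have hP : 0 < (2 * n + 1) * s + s ^ 2 := by nlinarith
  nlinarith [mul_le_mul_of_nonneg_right hb hP.le]

/-- If `0 < ε ≤ 8n/(2n+1)²` and `n ≥ 1`, then `g_n(r) = r - ε r^(2n+1)/(1+r^(2n))`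
is monotone increasing on `(0, ∞)`; consequently, for every `I > 0` the equation
`g_n(r) = I` has exactly one positive solution. -/
theorem gn_strictMono_and_unique_steady_state (ε n : ℝ) (hn : 1 ≤ n)
    (hε0 : 0 < ε) (hε : ε ≤ 8 * n / (2 * n + 1) ^ 2) :
    StrictMonoOn (fun r : ℝ => r - ε * r ^ (2 * n + 1) / (1 + r ^ (2 * n))) (Set.Ioi 0) ∧
    ∀ I : ℝ, 0 < I →
      ∃! r : ℝ, 0 < r ∧ r - ε * r ^ (2 * n + 1) / (1 + r ^ (2 * n)) = I := by
  set f : ℝ → ℝ := fun r : ℝ => r - ε * r ^ (2 * n + 1) / (1 + r ^ (2 * n)) with hf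
  -- ε < 1
  have hε1 : ε < 1 := by
    have h2 : (0:ℝ) < (2 * n + 1) ^ 2 := by positivity
    rw [le_div_iff₀ h2] at hε
    nlinarith [sq_nonneg (2 * n - 1)]
  -- the critical point
  set s₀ : ℝ := (2 * n + 1) / (2 * n - 1) with hs₀
  have hs₀pos : 0 < s₀ := by
    apply div_pos <;> linarith
  set r₀ : ℝ := s₀ ^ (2 * n)⁻¹ with hr₀
  have hr₀pos : 0 < r₀ := Real.rpow_pos_of_pos hs₀pos _
  -- derivative positive away from r₀
  have hpos : ∀ r : ℝ, 0 < r → r ≠ r₀ →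
      0 < 1 - ε * ((2 * n + 1) * r ^ (2 * n) + (r ^ (2 * n)) ^ 2) / (1 + r ^ (2 * n)) ^ 2 := by
    intro r hr hne
    apply gn_deriv_pos ε n _ hn hε (Real.rpow_pos_of_pos hr _)
    intro hcontra
    apply hne
    have hs : r ^ (2 * n) = s₀ := by
      rw [hs₀, eq_div_iff (by linarith : (2:ℝ) * n - 1 ≠ 0)]
      linarith [hcontra]
    have hm : (2:ℝ) * n ≠ 0 := by linarith
    have : (r ^ (2 * n)) ^ (2 * n)⁻¹ = r := by
      rw [← Real.rpow_mul hr.le, mul_inv_cancel₀ hm, Real.rpow_one]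
    rw [← this, hs]
  -- strict monotonicity on the two pieces
  have sm1 : StrictMonoOn f (Set.Ioc 0 r₀) := by
    apply strictMonoOn_of_deriv_pos (convex_Ioc 0 r₀)
    · intro x hx
      exact ((gn_hasDerivAt ε n hx.1).continuousAt).continuousWithinAt
    · intro x hx
      rw [interior_Ioc] at hx
      rw [(gn_hasDerivAt ε n hx.1).deriv]
      exact hpos x hx.1 (ne_of_lt hx.2)
  have sm2 : StrictMonoOn f (Set.Ici r₀) := by
    apply strictMonoOn_of_deriv_pos (convex_Ici r₀)
    · intro x hx
      exact ((gn_hasDerivAt ε n (lt_of_lt_of_le hr₀pos hx)).continuousAt).continuousWithinAt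
    · intro x hx
      rw [interior_Ici] at hx
      rw [(gn_hasDerivAt ε n (hr₀pos.trans hx)).deriv]
      exact hpos x (hr₀pos.trans hx) (ne_of_gt hx)
  have hmono : StrictMonoOn f (Set.Ioi 0) := by
    intro a ha b hb hab
    simp only [Set.mem_Ioi] at ha hb
    rcases le_or_gt b r₀ with h | h
    · exact sm1 ⟨ha, (hab.trans_le h).le⟩ ⟨hb, h⟩ hab
    · rcases le_or_gt r₀ a with h' | h'
      · exact sm2 h' (h'.trans hab.le) hab
      · calc f a < f r₀ := sm1 ⟨ha, h'.le⟩ ⟨hr₀pos, le_refl _⟩ h'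
          _ < f b := sm2 (le_refl r₀) h.le h
  refine ⟨hmono, ?_⟩
  intro I hI
  have hlt : ∀ r : ℝ, 0 < r → f r < r := by
    intro r hr
    have h1 : (0:ℝ) < 1 + r ^ (2 * n) := by positivity
    have hp : 0 < r ^ (2 * n + 1) := Real.rpow_pos_of_pos hr _
    have h2 : 0 < ε * r ^ (2 * n + 1) / (1 + r ^ (2 * n)) := by positivity
    simp only [hf]
    linarith
  have h1ε : 0 < 1 - ε := by linarith
  have hgt : ∀ r : ℝ, 0 < r → (1 - ε) * r < f r := by
    intro r hr
    have h1 : (0:ℝ) < 1 + r ^ (2 * n) := by positivity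
    have e2 : r ^ (2 * n + 1) = r ^ (2 * n) * r := by
      rw [Real.rpow_add hr, Real.rpow_one]
    have hs : 0 < r ^ (2 * n) := Real.rpow_pos_of_pos hr _
    have key : ε * r ^ (2 * n + 1) / (1 + r ^ (2 * n)) < ε * r := by
      rw [div_lt_iff₀ h1, e2]
      nlinarith
    simp only [hf]
    linarith
  set b : ℝ := I / (1 - ε) + 1 with hbdef
  have hIb : I ≤ b := by
    have h2 : I ≤ I / (1 - ε) := by
      rw [le_div_iff₀ h1ε]
      nlinarith
    simp only [hbdef]
    linarith
  have hbpos : 0 < b := lt_of_lt_of_le hI hIb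
  have hfb : I < f b := by
    have h3 := hgt b hbpos
    have h4 : (1 - ε) * b = I + (1 - ε) := by
      rw [hbdef]
      field_simp
    linarith
  have hfI : f I < I := hlt I hI
  have hcont : ContinuousOn f (Set.Icc I b) := fun x hx =>
    ((gn_hasDerivAt ε n (lt_of_lt_of_le hI hx.1)).continuousAt).continuousWithinAt
  obtain ⟨r, hr, hfr⟩ := intermediate_value_Ioo hIb hcont ⟨hfI, hfb⟩
  refine ⟨r, ⟨lt_trans hI hr.1, hfr⟩, ?_⟩
  intro y hy
  have h1 : y ∈ Set.Ioi (0:ℝ) := hy.1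
  have h2 : r ∈ Set.Ioi (0:ℝ) := lt_trans hI hr.1
  exact hmono.injOn h1 h2 (hy.2.trans hfr.symm)
end

section
/- The function g : (-1,1) → ℝ, g(x) = arccos(x)/√(1-x²), is strictly decreasing. -/
open Real

private lemma key_ineq {x : ℝ} (hx : x ∈ Set.Ioo (-1 : ℝ) 1) :
    x * Real.arccos x < Real.sqrt (1 - x ^ 2) := by
  have h1 : (0:ℝ) < 1 - x ^ 2 := by nlinarith [hx.1, hx.2]
  have hs : 0 < Real.sqrt (1 - x ^ 2) := Real.sqrt_pos.mpr h1
  rcases le_or_gt x 0 with hx0 | hx0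
  · have ha : 0 ≤ Real.arccos x := Real.arccos_nonneg x
    nlinarith
  · have hθ : Real.arccos x < π / 2 := Real.arccos_lt_pi_div_two.mpr hx0
    have hθ0 : 0 < Real.arccos x := Real.arccos_pos.mpr hx.2
    have := Real.lt_tan hθ0 hθ
    rw [Real.tan_eq_sin_div_cos, Real.sin_arccos, Real.cos_arccos hx.1.le hx.2.le] at this
    calc x * Real.arccos x < x * (Real.sqrt (1 - x ^ 2) / x) := by
          exact mul_lt_mul_of_pos_left this hx0
      _ = Real.sqrt (1 - x ^ 2) := by field_simp

private lemma g_deriv_neg {x : ℝ} (hx : x ∈ Set.Ioo (-1 : ℝ) 1) :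
    HasDerivAt (fun x : ℝ => Real.arccos x / Real.sqrt (1 - x ^ 2))
      ((x * Real.arccos x / Real.sqrt (1 - x ^ 2) - 1) / (1 - x ^ 2)) x := by
  have h1 : (0:ℝ) < 1 - x ^ 2 := by nlinarith [hx.1, hx.2]
  have hs : 0 < Real.sqrt (1 - x ^ 2) := Real.sqrt_pos.mpr h1
  have hne1 : x ≠ -1 := by rintro rfl; exact lt_irrefl _ hx.1
  have hne2 : x ≠ 1 := by rintro rfl; exact lt_irrefl _ hx.2
  have ha := Real.hasDerivAt_arccos hne1 hne2
  have hinner : HasDerivAt (fun x : ℝ => 1 - x ^ 2) (-(2 * x)) x := by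
    simpa using ((hasDerivAt_pow 2 x).const_sub 1)
  have hsq : HasDerivAt (fun x : ℝ => Real.sqrt (1 - x ^ 2))
      (-(2 * x) / (2 * Real.sqrt (1 - x ^ 2))) x :=
    hinner.sqrt h1.ne'
  have := ha.div hsq hs.ne'
  refine this.congr_deriv ?_
  have hsqsq : Real.sqrt (1 - x ^ 2) ^ 2 = 1 - x ^ 2 := Real.sq_sqrt h1.le
  field_simp
  rw [hsqsq]; ring

/-- The function `g(x) = arccos(x)/√(1-x²)` is strictly decreasing on `(-1, 1)`. -/
theorem arccos_div_sqrt_strictAnti :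
    StrictAntiOn (fun x : ℝ => Real.arccos x / Real.sqrt (1 - x ^ 2))
      (Set.Ioo (-1 : ℝ) 1) := by
  have hint : interior (Set.Ioo (-1:ℝ) 1) = Set.Ioo (-1:ℝ) 1 := interior_Ioo
  refine strictAntiOn_of_hasDerivWithinAt_neg (f' := fun x =>
      (x * Real.arccos x / Real.sqrt (1 - x ^ 2) - 1) / (1 - x ^ 2))
    (convex_Ioo _ _) ?_ ?_ ?_
  · intro x hx
    exact (g_deriv_neg hx).continuousAt.continuousWithinAt
  · intro x hx
    rw [hint] at hx ⊢
    exact (g_deriv_neg hx).hasDerivWithinAt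
  · intro x hx
    rw [hint] at hx
    have h1 : (0:ℝ) < 1 - x ^ 2 := by nlinarith [hx.1, hx.2]
    have hs : 0 < Real.sqrt (1 - x ^ 2) := Real.sqrt_pos.mpr h1
    have hk := key_ineq hx
    have : x * Real.arccos x / Real.sqrt (1 - x ^ 2) < 1 := by
      rw [div_lt_one hs]; linarith
    exact div_neg_of_neg_of_pos (by linarith) h1
end

section
/- If 0 < x < 1 then 1 < arccos(x)/√(1-x²) < π/2. Consequently τ₀¹ = τ_r·g(ε(f(r²)+2r²f'(r²))) lies in the open interval (τ_r, τ_r·π/2) whenever the argument lies in (0,1). -/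
/-- If `0 < x < 1` then `1 < arccos(x)/√(1-x²) < π/2`. Consequently, for `τ_r > 0`,
the critical delay `τ_r · g(x)` lies in `(τ_r, τ_r π/2)` whenever `x ∈ (0,1)`. -/
theorem arccos_div_sqrt_between_one_and_pi_div_two :
    (∀ x : ℝ, 0 < x → x < 1 →
      1 < Real.arccos x / Real.sqrt (1 - x ^ 2) ∧
      Real.arccos x / Real.sqrt (1 - x ^ 2) < Real.pi / 2) ∧
    ∀ (τr x : ℝ), 0 < τr → 0 < x → x < 1 →
      τr * (Real.arccos x / Real.sqrt (1 - x ^ 2)) ∈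
        Set.Ioo τr (τr * Real.pi / 2) := by
  have main : ∀ x : ℝ, 0 < x → x < 1 →
      1 < Real.arccos x / Real.sqrt (1 - x ^ 2) ∧
      Real.arccos x / Real.sqrt (1 - x ^ 2) < Real.pi / 2 := by
    intro x hx0 hx1
    set t := Real.arccos x with ht
    have ht0 : 0 < t := Real.arccos_pos.2 hx1
    have htlt : t < Real.pi / 2 := Real.arccos_lt_pi_div_two.2 hx0
    have hy : Real.sin t = Real.sqrt (1 - x ^ 2) := Real.sin_arccos x
    have hy0 : 0 < Real.sqrt (1 - x ^ 2) := by
      apply Real.sqrt_pos.2; nlinarith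
    constructor
    · rw [lt_div_iff₀ hy0, one_mul, ← hy]
      exact Real.sin_lt ht0
    · rw [div_lt_iff₀ hy0, ← hy]
      have := Real.mul_lt_sin ht0 htlt
      have hpi := Real.pi_pos
      calc t = Real.pi / 2 * (2 / Real.pi * t) := by field_simp
        _ < Real.pi / 2 * Real.sin t := by
            apply mul_lt_mul_of_pos_left this; positivity
  refine ⟨main, fun τr x hτ hx0 hx1 => ?_⟩
  obtain ⟨h1, h2⟩ := main x hx0 hx1
  constructor
  · nlinarith
  · have := mul_lt_mul_of_pos_left h2 hτ
    linarith [this]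
end

section
/- Let r, ε, τ_r, τ_w > 0, let f be the Hill function f(x) = x^n/(1+x^n) with n ≥ 1, and set w = ε·f(r²). Then for any λ ∈ ℂ and τ ≥ 0, the characteristic determinant of the three-equation model at the symmetric steady state factorizes as: τ_r²τ_w·det C(λ) = (τ_r λ + w + e^{-τλ}) · (τ_r τ_w λ² + (τ_r - τ_w w)λ - 2ε f'(r²) r² - w + (τ_w λ + 1)e^{-τλ}). -/
set_option maxHeartbeats 1600000


open Complex

/-- The characteristic determinant of the three-equation delayed model, linearized at
the symmetric steady state `(r, r, w)` with `w = ε f(r²)`, `f` the Hill function with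
exponent `n ≥ 1`, factorizes as
`τ_r² τ_w det C(λ) = (τ_r λ + w + e^{-τλ}) ·
  (τ_r τ_w λ² + (τ_r - τ_w w)λ - 2ε f'(r²) r² - w + (τ_w λ + 1) e^{-τλ})`. -/
theorem three_eq_characteristic_factorization
    (r ε τr τw n : ℝ) (hr : 0 < r) (hε : 0 < ε) (hτr : 0 < τr) (hτw : 0 < τw)
    (hn : 1 ≤ n) (f : ℝ → ℝ) (hf : ∀ x : ℝ, f x = x ^ n / (1 + x ^ n))
    (w : ℝ) (hw : w = ε * f (r ^ 2)) (τ : ℝ) (hτ : 0 ≤ τ) (lam : ℂ) :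
    let A : Matrix (Fin 3) (Fin 3) ℂ :=
      Matrix.of ![![0, (w / τr : ℝ), (r / τr : ℝ)],
        ![(w / τr : ℝ), 0, (r / τr : ℝ)],
        ![(ε * r * deriv f (r ^ 2) / τw : ℝ), (ε * r * deriv f (r ^ 2) / τw : ℝ),
          (-(1 / τw) : ℝ)]]
    let B : Matrix (Fin 3) (Fin 3) ℂ :=
      Matrix.of ![![(-(1 / τr) : ℝ), 0, 0], ![0, (-(1 / τr) : ℝ), 0], ![0, 0, 0]]
    let C : Matrix (Fin 3) (Fin 3) ℂ :=
      lam • (1 : Matrix (Fin 3) (Fin 3) ℂ) - A - Complex.exp (-lam * τ) • B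
    (τr : ℂ) ^ 2 * (τw : ℂ) * C.det =
      ((τr : ℂ) * lam + (w : ℂ) + Complex.exp (-(τ : ℂ) * lam)) *
        ((τr : ℂ) * (τw : ℂ) * lam ^ 2 + ((τr : ℂ) - (τw : ℂ) * (w : ℂ)) * lam -
          2 * (ε : ℂ) * ((deriv f (r ^ 2) : ℝ) : ℂ) * (r : ℂ) ^ 2 - (w : ℂ) +
          ((τw : ℂ) * lam + 1) * Complex.exp (-(τ : ℂ) * lam)) := by
  intro A B C
  have hτr' : (τr:ℂ) ≠ 0 := Complex.ofReal_ne_zero.2 hτr.ne'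
  have hτw' : (τw:ℂ) ≠ 0 := Complex.ofReal_ne_zero.2 hτw.ne'
  have hE : Complex.exp (-lam * τ) = Complex.exp (-(τ:ℂ) * lam) := by
    rw [neg_mul, mul_comm, ← neg_mul]
  simp only [C, A, B, Matrix.det_fin_three, Matrix.sub_apply, Matrix.smul_apply,
    Matrix.one_apply, Matrix.of_apply, Matrix.cons_val', Matrix.cons_val_zero,
    Matrix.cons_val_one, Matrix.cons_val_two, Matrix.tail_cons, Matrix.head_cons, Matrix.empty_val', Matrix.cons_val_fin_one,
    Matrix.head_fin_const, smul_eq_mul, Complex.ofReal_div, Complex.ofReal_neg,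
    Complex.ofReal_mul, Complex.ofReal_one, hE]
  norm_num [Matrix.vecHead, Matrix.vecTail, Fin.ext_iff]
  field_simp
  ring
end
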